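/- Let u : ℝ × ℝ → ℝ be C² (in particular with equal mixed second partial derivatives) and m : ℝ × ℝ → ℝ be C¹ with m(x,t) > 0 for all (x,t). Suppose that ∂_t u + (∂_x u)²/2 = ln(m) and ∂_t m − ∂_x (m · ∂_x u) = 0 hold everywhere. Then u satisfies the nonlinear wave equation ∂_{tt} u(x,t) = (1 + (∂_x u(x,t))²) · ∂_{xx} u(x,t) for all (x,t). -/

import Mathlib

open ContinuousLinearMap in
/-- Partial derivative of a 2D function along the first coordinate. -/
lemma hasDerivAt_fst_line (f : ℝ × ℝ → ℝ) (x t : ℝ)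
    (hf : DifferentiableAt ℝ f (x, t)) :
    HasDerivAt (fun y => f (y, t)) (fderiv ℝ f (x, t) (1, 0)) x :=
  hf.hasFDerivAt.comp_hasDerivAt x ((hasDerivAt_id x).prodMk (hasDerivAt_const x t))

lemma hasDerivAt_snd_line (f : ℝ × ℝ → ℝ) (x t : ℝ)
    (hf : DifferentiableAt ℝ f (x, t)) :
    HasDerivAt (fun s => f (x, s)) (fderiv ℝ f (x, t) (0, 1)) t :=
  hf.hasFDerivAt.comp_hasDerivAt t ((hasDerivAt_const t x).prodMk (hasDerivAt_id t))

/-- Partial derivative along the first coordinate of an evaluated derivative family. -/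
lemma hasDerivAt_eval_fst_line (F : ℝ × ℝ → (ℝ × ℝ →L[ℝ] ℝ)) (v : ℝ × ℝ) (x t : ℝ)
    (hF : DifferentiableAt ℝ F (x, t)) :
    HasDerivAt (fun y => F (y, t) v) (fderiv ℝ F (x, t) (1, 0) v) x := by
  have h1 : HasFDerivAt (fun q => F q v)
      ((ContinuousLinearMap.apply ℝ ℝ v).comp (fderiv ℝ F (x, t))) (x, t) :=
    (ContinuousLinearMap.apply ℝ ℝ v).hasFDerivAt.comp (x, t) hF.hasFDerivAt
  exact h1.comp_hasDerivAt x ((hasDerivAt_id x).prodMk (hasDerivAt_const x t))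

lemma hasDerivAt_eval_snd_line (F : ℝ × ℝ → (ℝ × ℝ →L[ℝ] ℝ)) (v : ℝ × ℝ) (x t : ℝ)
    (hF : DifferentiableAt ℝ F (x, t)) :
    HasDerivAt (fun s => F (x, s) v) (fderiv ℝ F (x, t) (0, 1) v) t := by
  have h1 : HasFDerivAt (fun q => F q v)
      ((ContinuousLinearMap.apply ℝ ℝ v).comp (fderiv ℝ F (x, t))) (x, t) :=
    (ContinuousLinearMap.apply ℝ ℝ v).hasFDerivAt.comp (x, t) hF.hasFDerivAt
  exact h1.comp_hasDerivAt t ((hasDerivAt_const t x).prodMk (hasDerivAt_id t))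

/-- If `u` (C²) and `m` (C¹, positive) solve the forward-forward MFG system with
quadratic Hamiltonian `H(p)=p²/2` and logarithmic coupling `g(m)=ln m`, i.e.
`∂_t u + (∂_x u)²/2 = ln m` and `∂_t m − ∂_x(m ∂_x u) = 0`, then `u` satisfies the
nonlinear wave equation `∂_tt u = (1 + (∂_x u)²) ∂_xx u`. -/
theorem forward_forward_quadratic_log_nonlinear_wave
    (u m : ℝ → ℝ → ℝ)
    (hu : ContDiff ℝ 2 (fun p : ℝ × ℝ => u p.1 p.2))
    (hm : ContDiff ℝ 1 (fun p : ℝ × ℝ => m p.1 p.2))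
    (hmpos : ∀ x t : ℝ, 0 < m x t)
    (heq1 : ∀ x t : ℝ,
      deriv (fun s => u x s) t + (deriv (fun y => u y t) x) ^ 2 / 2 = Real.log (m x t))
    (heq2 : ∀ x t : ℝ,
      deriv (fun s => m x s) t -
        deriv (fun y => m y t * deriv (fun z => u z t) y) x = 0) :
    ∀ x t : ℝ,
      deriv (fun s => deriv (fun r => u x r) s) t =
        (1 + (deriv (fun y => u y t) x) ^ 2) *
          deriv (fun y => deriv (fun z => u z t) y) x := by
  intro x t
  set U : ℝ × ℝ → ℝ := fun p => u p.1 p.2 with hUdef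
  set M : ℝ × ℝ → ℝ := fun p => m p.1 p.2 with hMdef
  set F : ℝ × ℝ → (ℝ × ℝ →L[ℝ] ℝ) := fderiv ℝ U with hFdef
  have hUdiff : Differentiable ℝ U := hu.differentiable two_ne_zero
  have hMdiff : Differentiable ℝ M := hm.differentiable one_ne_zero
  have hF : ContDiff ℝ 1 F := hu.fderiv_right (by norm_num)
  have hFdiff : Differentiable ℝ F := hF.differentiable one_ne_zero
  -- partial derivatives of u
  have hux : ∀ a b : ℝ, HasDerivAt (fun y => u y b) (F (a, b) (1, 0)) a := fun a b =>
    hasDerivAt_fst_line U a b (hUdiff _)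
  have hut : ∀ a b : ℝ, HasDerivAt (fun s => u a s) (F (a, b) (0, 1)) b := fun a b =>
    hasDerivAt_snd_line U a b (hUdiff _)
  have hux' : ∀ a b : ℝ, deriv (fun y => u y b) a = F (a, b) (1, 0) := fun a b =>
    (hux a b).deriv
  have hut' : ∀ a b : ℝ, deriv (fun s => u a s) b = F (a, b) (0, 1) := fun a b =>
    (hut a b).deriv
  -- partial derivatives of m
  have hmx : ∀ a b : ℝ, HasDerivAt (fun y => m y b) (fderiv ℝ M (a, b) (1, 0)) a := fun a b =>
    hasDerivAt_fst_line M a b (hMdiff _)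
  have hmt : ∀ a b : ℝ, HasDerivAt (fun s => m a s) (fderiv ℝ M (a, b) (0, 1)) b := fun a b =>
    hasDerivAt_snd_line M a b (hMdiff _)
  -- abbreviations at the point (x,t)
  set a := F (x, t) (1, 0) with ha
  set utt := fderiv ℝ F (x, t) (0, 1) (0, 1) with hutt
  set uxt := fderiv ℝ F (x, t) (0, 1) (1, 0) with huxt
  set utx := fderiv ℝ F (x, t) (1, 0) (0, 1) with hutx
  set uxx := fderiv ℝ F (x, t) (1, 0) (1, 0) with huxx
  set mt := fderiv ℝ M (x, t) (0, 1) with hmt'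
  set mx := fderiv ℝ M (x, t) (1, 0) with hmx'
  have hM0 : M (x, t) ≠ 0 := ne_of_gt (hmpos x t)
  -- symmetry of second derivatives
  have hsym : uxt = utx := by
    have := (hu.contDiffAt (x := (x, t))).isSymmSndFDerivAt (by norm_num)
    exact this (0, 1) (1, 0)
  -- E1 : differentiate heq1 in t
  have E1 : utt + a * uxt = mt / M (x, t) := by
    have h1 : HasDerivAt (fun s => F (x, s) (0, 1)) utt t :=
      hasDerivAt_eval_snd_line F (0, 1) x t (hFdiff _)
    have h2 : HasDerivAt (fun s => F (x, s) (1, 0)) uxt t :=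
      hasDerivAt_eval_snd_line F (1, 0) x t (hFdiff _)
    have h3 : HasDerivAt (fun s => (F (x, s) (1, 0)) ^ 2 / 2) (a * uxt) t := by
      have h := ((h2.pow 2).div_const 2)
      have : (2 : ℕ) * F (x, t) (1, 0) ^ (2 - 1) * uxt / 2 = a * uxt := by
        rw [ha]; push_cast; ring
      rwa [this] at h
    have hL : HasDerivAt (fun s => F (x, s) (0, 1) + (F (x, s) (1, 0)) ^ 2 / 2)
        (utt + a * uxt) t := h1.add h3
    have hR : HasDerivAt (fun s => Real.log (m x s)) (mt / M (x, t)) t :=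
      (hmt x t).log hM0
    have hfun : (fun s => F (x, s) (0, 1) + (F (x, s) (1, 0)) ^ 2 / 2)
        = fun s => Real.log (m x s) := by
      funext s
      rw [← hut' x s, ← hux' x s]
      exact heq1 x s
    rw [hfun] at hL
    exact hL.unique hR
  -- E2 : differentiate heq1 in x
  have E2 : utx + a * uxx = mx / M (x, t) := by
    have h1 : HasDerivAt (fun y => F (y, t) (0, 1)) utx x :=
      hasDerivAt_eval_fst_line F (0, 1) x t (hFdiff _)
    have h2 : HasDerivAt (fun y => F (y, t) (1, 0)) uxx x :=
      hasDerivAt_eval_fst_line F (1, 0) x t (hFdiff _)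
    have h3 : HasDerivAt (fun y => (F (y, t) (1, 0)) ^ 2 / 2) (a * uxx) x := by
      have h := ((h2.pow 2).div_const 2)
      have : (2 : ℕ) * F (x, t) (1, 0) ^ (2 - 1) * uxx / 2 = a * uxx := by
        rw [ha]; push_cast; ring
      rwa [this] at h
    have hL : HasDerivAt (fun y => F (y, t) (0, 1) + (F (y, t) (1, 0)) ^ 2 / 2)
        (utx + a * uxx) x := h1.add h3
    have hR : HasDerivAt (fun y => Real.log (m y t)) (mx / M (x, t)) x :=
      (hmx x t).log hM0
    have hfun : (fun y => F (y, t) (0, 1) + (F (y, t) (1, 0)) ^ 2 / 2)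
        = fun y => Real.log (m y t) := by
      funext y
      rw [← hut' y t, ← hux' y t]
      exact heq1 y t
    rw [hfun] at hL
    exact hL.unique hR
  -- E3 : from heq2
  have E3 : mt = mx * a + M (x, t) * uxx := by
    have h2 := heq2 x t
    have hprod : HasDerivAt (fun y => m y t * deriv (fun z => u z t) y)
        (mx * a + M (x, t) * uxx) x := by
      have h1 : HasDerivAt (fun y => m y t * F (y, t) (1, 0))
          (mx * F (x, t) (1, 0) + M (x, t) * uxx) x :=
        (hmx x t).mul (hasDerivAt_eval_fst_line F (1, 0) x t (hFdiff _))
      have hfun : (fun y => m y t * deriv (fun z => u z t) y)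
          = fun y => m y t * F (y, t) (1, 0) := funext fun y => by rw [hux' y t]
      rw [hfun]
      exact h1
    rw [(hmt x t).deriv, hprod.deriv] at h2
    linarith
  -- rewrite the goal
  have hgoal1 : deriv (fun s => deriv (fun r => u x r) s) t = utt := by
    have hfun : (fun s => deriv (fun r => u x r) s) = fun s => F (x, s) (0, 1) :=
      funext fun s => hut' x s
    rw [hfun, (hasDerivAt_eval_snd_line F (0, 1) x t (hFdiff _)).deriv]
  have hgoal2 : deriv (fun y => deriv (fun z => u z t) y) x = uxx := by
    have hfun : (fun y => deriv (fun z => u z t) y) = fun y => F (y, t) (1, 0) :=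
      funext fun y => hux' y t
    rw [hfun, (hasDerivAt_eval_fst_line F (1, 0) x t (hFdiff _)).deriv]
  rw [hgoal1, hgoal2, hux' x t, ← ha]
  -- algebra
  have hE1 : (utt + a * uxt) * M (x, t) = mt := by
    rw [E1]; field_simp
  have hE2 : (utx + a * uxx) * M (x, t) = mx := by
    rw [E2]; field_simp
  rw [hsym] at hE1
  have key : utt * M (x, t) = ((1 + a ^ 2) * uxx) * M (x, t) := by
    linear_combination hE1 - a * hE2 + E3
  exact mul_right_cancel₀ hM0 key
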